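/- arXiv:1702.07531 — 2 statements merged into one kernel-verified Lean document; each statement's English description precedes it below -/
import Mathlib

section
/- Let f̃ ∈ H^r_⋄(∂D) with r ∈ ℕ, and let z̃_m = e^{2πim/M}, m = 0,…,M−1, be equidistant points on the unit circle. If the point masses f̃_M := (2π/M) Σ_m f̃(z̃_m) δ_{z̃_m} satisfy Σ_m f̃(z̃_m) = 0, then ‖f̃_M − f̃‖_{H^{-r}(∂D)} ≤ C M^{-r} ‖f̃‖_{H^r(∂D)}, with C = C(r) independent of M ≥ 2 and f̃. -/
open MeasureTheory
open intervalIntegral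

/-- The Sobolev norm of order `r` of a (2π-periodic) function on the circle:
`‖f‖_{H^r} = (Σ_{j=0}^{r} ‖f^{(j)}‖²_{L²(0,2π)})^{1/2}`. -/
noncomputable def Hnorm (r : ℕ) (f : ℝ → ℂ) : ℝ :=
  (∑ j ∈ Finset.range (r + 1),
    ∫ s in (0 : ℝ)..(2 * Real.pi), ‖iteratedDeriv j f s‖ ^ 2) ^ ((1 : ℝ) / 2)



lemma periodic_iteratedDeriv {g : ℝ → ℂ} {T : ℝ} (hg : ∀ s, g (s + T) = g s) (n : ℕ) :
    ∀ s, iteratedDeriv n g (s + T) = iteratedDeriv n g s := by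
  induction n with
  | zero => simpa using hg
  | succ n ih =>
    intro s
    simp only [iteratedDeriv_succ]
    have : (fun x => iteratedDeriv n g (x + T)) = iteratedDeriv n g := funext ih
    calc deriv (iteratedDeriv n g) (s + T)
        = deriv (fun x => iteratedDeriv n g (x + T)) s := (deriv_comp_add_const _ _ _).symm
      _ = deriv (iteratedDeriv n g) s := by rw [this]

lemma iteratedDeriv_iteratedDeriv' (m n : ℕ) (g : ℝ → ℂ) :
    iteratedDeriv m (iteratedDeriv n g) = iteratedDeriv (m + n) g := by
  induction n generalizing g with
  | zero => simp
  | succ n ih =>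
    rw [iteratedDeriv_succ', ih (deriv g), ← iteratedDeriv_succ']
    congr 1


lemma taylor_integral (k : ℕ) (g : ℝ → ℂ) (hg : ContDiff ℝ k g) (a b : ℝ) :
    ∫ s in a..b, g s =
      (∑ j ∈ Finset.range k,
        (((b - a) ^ (j+1) / (j+1).factorial : ℝ) : ℂ) * iteratedDeriv j g a)
      + ∫ s in a..b, (((b - s) ^ k / k.factorial : ℝ) : ℂ) * iteratedDeriv k g s := by
  induction k with
  | zero => simp
  | succ k ih =>
    have hgk : ContDiff ℝ k g := hg.of_le (by exact_mod_cast Nat.le_succ k)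
    rw [ih hgk]
    have hG : ∀ x, HasDerivAt (iteratedDeriv k g) (iteratedDeriv (k+1) g x) x := by
      intro x
      rw [iteratedDeriv_succ]
      exact ((hg.differentiable_iteratedDeriv k
        (by exact_mod_cast Nat.lt_succ_self k)) x).hasDerivAt
    have hu : ∀ x : ℝ, HasDerivAt (fun x : ℝ => -((b - x) ^ (k+1) / (k+1).factorial : ℝ))
        ((b - x) ^ k / k.factorial) x := by
      intro x
      have h1 : HasDerivAt (fun x : ℝ => b - x) (-1) x := (hasDerivAt_id x).const_sub b
      have h2 := (h1.pow (k+1)).div_const ((k+1).factorial : ℝ)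
      have h3 := h2.neg
      refine h3.congr_deriv ?_
      rw [Nat.add_sub_cancel, Nat.cast_succ]
      have : ((k+1).factorial : ℝ) = (k+1) * k.factorial := by
        rw [Nat.factorial_succ]; push_cast; ring
      rw [this]
      field_simp
    have huC : ∀ x : ℝ, HasDerivAt (fun x : ℝ => (((-((b - x) ^ (k+1) / (k+1).factorial)) : ℝ) : ℂ))
        ((((b - x) ^ k / k.factorial : ℝ)) : ℂ) x := fun x => (hu x).ofReal_comp
    have hcont1 : Continuous fun s : ℝ => (((b - s) ^ k / k.factorial : ℝ) : ℂ) := by continuity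
    have hcont2 : Continuous (iteratedDeriv (k+1) g) :=
      hg.continuous_iteratedDeriv (k+1) le_rfl
    have hparts := integral_mul_deriv_eq_deriv_mul
      (u := fun x : ℝ => (((-((b - x) ^ (k+1) / (k+1).factorial)) : ℝ) : ℂ))
      (v := iteratedDeriv k g)
      (u' := fun x : ℝ => (((b - x) ^ k / k.factorial : ℝ) : ℂ))
      (v' := iteratedDeriv (k+1) g)
      (fun x _ => huC x) (fun x _ => hG x)
      (hcont1.intervalIntegrable a b) (hcont2.intervalIntegrable a b)
    -- hparts : ∫ u * v' = u b * v b - u a * v a - ∫ u' * v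
    have key : ∫ s in a..b, (((b - s) ^ k / k.factorial : ℝ) : ℂ) * iteratedDeriv k g s
        = (((b - a) ^ (k+1) / (k+1).factorial : ℝ) : ℂ) * iteratedDeriv k g a
          + ∫ s in a..b, (((b - s) ^ (k+1) / (k+1).factorial : ℝ) : ℂ)
              * iteratedDeriv (k+1) g s := by
      have hb0 : (((-((b - b) ^ (k+1) / (k+1).factorial) : ℝ)) : ℂ) = 0 := by simp
      have hInt : ∫ s in a..b, (((-((b - s) ^ (k+1) / (k+1).factorial) : ℝ)) : ℂ)
          * iteratedDeriv (k+1) g s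
          = - ∫ s in a..b, (((b - s) ^ (k+1) / (k+1).factorial : ℝ) : ℂ)
              * iteratedDeriv (k+1) g s := by
        rw [← intervalIntegral.integral_neg]
        congr 1; funext s; push_cast; ring
      rw [hInt] at hparts
      push_cast at hparts ⊢
      linear_combination hparts
    rw [key, Finset.sum_range_succ]
    ring

lemma contDiff_iteratedDeriv_sub {k j : ℕ} (hj : j ≤ k) {g : ℝ → ℂ} (hg : ContDiff ℝ k g) :
    ContDiff ℝ (k - j : ℕ) (iteratedDeriv j g) := by
  rw [iteratedDeriv_eq_iterate]
  exact ContDiff.iterate_deriv' (k - j) j (by rwa [Nat.sub_add_cancel hj])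

lemma quad_bound : ∀ k : ℕ, 1 ≤ k → ∃ C > 0, ∀ M : ℕ, 1 ≤ M → ∀ g : ℝ → ℂ,
    ContDiff ℝ k g → (∀ s, g (s + 2 * Real.pi) = g s) →
    ‖((2 * Real.pi / M) * (∑ m ∈ Finset.range M, g (2 * Real.pi * m / M))
        - ∫ s in (0:ℝ)..(2 * Real.pi), g s)‖
      ≤ C * (2 * Real.pi / M) ^ k * ∫ s in (0:ℝ)..(2 * Real.pi), ‖iteratedDeriv k g s‖ := by
  intro k
  induction k using Nat.strong_induction_on with
  | _ k IH =>
  intro hk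
  have key : ∀ j : ℕ, ∃ Cj : ℝ, 0 < Cj ∧ (1 ≤ j → j < k →
      ∀ M : ℕ, 1 ≤ M → ∀ g : ℝ → ℂ, ContDiff ℝ (k - j : ℕ) g →
        (∀ s, g (s + 2 * Real.pi) = g s) →
        ‖((2 * Real.pi / M) * (∑ m ∈ Finset.range M, g (2 * Real.pi * m / M))
            - ∫ s in (0:ℝ)..(2 * Real.pi), g s)‖
          ≤ Cj * (2 * Real.pi / M) ^ (k - j) *
            ∫ s in (0:ℝ)..(2 * Real.pi), ‖iteratedDeriv (k - j) g s‖) := by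
    intro j
    by_cases hcase : 1 ≤ j ∧ j < k
    · obtain ⟨C, hC, hCb⟩ := IH (k - j) (by omega) (by omega)
      exact ⟨C, hC, fun _ _ => hCb⟩
    · exact ⟨1, one_pos, fun h1 h2 => absurd ⟨h1, h2⟩ hcase⟩
  choose Cf hCfpos hCf using key
  have hsum0 : 0 ≤ ∑ j ∈ Finset.Ico 1 k, Cf j / (j + 1).factorial :=
    Finset.sum_nonneg fun j _ => div_nonneg (hCfpos j).le (by positivity)
  refine ⟨(∑ j ∈ Finset.Ico 1 k, Cf j / (j + 1).factorial) + 1, by linarith, ?_⟩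
  intro M hM g hg hper
  have hMpos : (0:ℝ) < M := by exact_mod_cast hM
  have hπ : (0:ℝ) < 2 * Real.pi := by positivity
  set h : ℝ := 2 * Real.pi / M with hdef
  have hpos : 0 < h := by positivity
  set a : ℕ → ℝ := fun m => 2 * Real.pi * m / M with hadef
  have ha0 : a 0 = 0 := by simp [hadef]
  have haM : a M = 2 * Real.pi := by rw [hadef]; field_simp
  have hstep : ∀ m : ℕ, a (m + 1) - a m = h := by
    intro m; rw [hadef, hdef]; push_cast; field_simp; ring
  have haa : ∀ m : ℕ, a m ≤ a (m + 1) := by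
    intro m; nlinarith [hstep m]
  have hcont : Continuous g := hg.continuous
  have hGk : Continuous (iteratedDeriv k g) :=
    hg.continuous_iteratedDeriv k le_rfl
  set I : ℝ := ∫ s in (0:ℝ)..(2 * Real.pi), ‖iteratedDeriv k g s‖ with hIdef
  have hI : 0 ≤ I := by
    rw [hIdef]
    exact intervalIntegral.integral_nonneg hπ.le (fun s _ => norm_nonneg _)
  have hsplit : ∀ (F : ℝ → ℂ), Continuous F →
      ∑ m ∈ Finset.range M, ∫ s in a m..a (m+1), F s = ∫ s in (0:ℝ)..(2 * Real.pi), F s := by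
    intro F hF
    have := intervalIntegral.sum_integral_adjacent_intervals (a := a) (n := M)
      (μ := volume) (f := F) (fun i _ => (hF.intervalIntegrable _ _))
    rwa [ha0, haM] at this
  have hsplitR : ∑ m ∈ Finset.range M, ∫ s in a m..a (m+1), ‖iteratedDeriv k g s‖ = I := by
    have := intervalIntegral.sum_integral_adjacent_intervals (a := a) (n := M)
      (μ := volume) (f := fun s => ‖iteratedDeriv k g s‖)
      (fun i _ => ((hGk.norm).intervalIntegrable _ _))
    rw [ha0, haM] at this
    rw [hIdef]; exact this
  set c : ℕ → ℂ := fun j => (((h ^ (j+1) / (j+1).factorial : ℝ)) : ℂ) with hcdef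
  set S : ℕ → ℂ := fun j => ∑ m ∈ Finset.range M, iteratedDeriv j g (a m) with hSdef
  set R : ℕ → ℂ := fun m =>
    ∫ s in a m..a (m+1), (((a (m+1) - s) ^ k / k.factorial : ℝ) : ℂ) * iteratedDeriv k g s
    with hRdef
  have htay : ∀ m : ℕ, ∫ s in a m..a (m+1), g s
      = (∑ j ∈ Finset.range k, c j * iteratedDeriv j g (a m)) + R m := by
    intro m
    rw [taylor_integral k g hg (a m) (a (m+1)), hstep m]
  have hint_eq : ∫ s in (0:ℝ)..(2 * Real.pi), g s
      = (∑ j ∈ Finset.range k, c j * S j) + ∑ m ∈ Finset.range M, R m := by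
    rw [← hsplit g hcont, Finset.sum_congr rfl fun m _ => htay m, Finset.sum_add_distrib]
    congr 1
    rw [Finset.sum_comm]
    exact Finset.sum_congr rfl fun j _ => (Finset.mul_sum _ _ _).symm
  have hcast : (2 * ↑Real.pi / ↑M : ℂ) = ((h : ℝ) : ℂ) := by
    rw [hdef]; push_cast; ring
  have hnode : ∀ (F : ℝ → ℂ),
      (∑ m ∈ Finset.range M, F (2 * Real.pi * ↑m / ↑M)) = ∑ m ∈ Finset.range M, F (a m) := by
    intro F
    exact Finset.sum_congr rfl fun m _ => by rw [hadef]
  have hE : (2 * ↑Real.pi / ↑M : ℂ) * (∑ m ∈ Finset.range M, g (2 * Real.pi * ↑m / ↑M))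
      - ∫ s in (0:ℝ)..(2 * Real.pi), g s
      = -(∑ j ∈ Finset.Ico 1 k, c j * S j) - ∑ m ∈ Finset.range M, R m := by
    rw [hint_eq, hcast, hnode g]
    have hrange : ∑ j ∈ Finset.range k, c j * S j
        = c 0 * S 0 + ∑ j ∈ Finset.Ico 1 k, c j * S j := by
      rw [Finset.range_eq_Ico, ← Finset.sum_Ico_consecutive _ (Nat.zero_le 1) hk]
      congr 1
      rw [← Finset.range_eq_Ico, Finset.sum_range_one]
    rw [hrange]
    have hc0 : c 0 = ((h : ℝ) : ℂ) := by simp [hcdef]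
    have hS0 : S 0 = ∑ m ∈ Finset.range M, g (a m) := by simp [hSdef]
    rw [hc0, hS0]
    ring
  -- bound each aliasing term
  have hCsum : ∀ j ∈ Finset.Ico 1 k,
      ‖c j * S j‖ ≤ (Cf j / (j + 1).factorial) * h ^ k * I := by
    intro j hj
    rw [Finset.mem_Ico] at hj
    have hjk : j ≤ k := hj.2.le
    have hGj : ContDiff ℝ (k - j : ℕ) (iteratedDeriv j g) := contDiff_iteratedDeriv_sub hjk hg
    have hGjper : ∀ s, iteratedDeriv j g (s + 2 * Real.pi) = iteratedDeriv j g s :=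
      periodic_iteratedDeriv hper j
    have hzero : ∫ s in (0:ℝ)..(2 * Real.pi), iteratedDeriv j g s = 0 := by
      obtain ⟨j', rfl⟩ : ∃ j', j = j' + 1 := ⟨j - 1, by omega⟩
      have hdiff : ∀ x ∈ Set.uIcc (0:ℝ) (2 * Real.pi),
          DifferentiableAt ℝ (iteratedDeriv j' g) x := fun x _ =>
        (hg.differentiable_iteratedDeriv j' (by exact_mod_cast (by omega : j' < k))) x
      have hderiv_cont : Continuous (iteratedDeriv (j' + 1) g) :=
        hg.continuous_iteratedDeriv _ (by exact_mod_cast hjk)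
      rw [iteratedDeriv_succ]
      rw [intervalIntegral.integral_deriv_eq_sub hdiff
        (by rw [← iteratedDeriv_succ]; exact hderiv_cont.intervalIntegrable _ _)]
      have := periodic_iteratedDeriv hper j' 0
      simp only [zero_add] at this
      rw [this, sub_self]
    have hb := hCf j hj.1 hj.2 M hM (iteratedDeriv j g) hGj hGjper
    rw [hzero, sub_zero, hnode (iteratedDeriv j g), hcast,
      iteratedDeriv_iteratedDeriv'] at hb
    have hkj : k - j + j = k := by omega
    rw [hkj] at hb
    -- hb : abs (↑h * S j) ≤ Cf j * h ^ (k - j) * I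
    have habs : ‖((h:ℝ):ℂ) * S j‖ = h * ‖S j‖ := by
      rw [norm_mul, Complex.norm_real, Real.norm_of_nonneg hpos.le]
    rw [habs] at hb
    have hSj : ‖S j‖ ≤ Cf j * h ^ (k - j) * I / h := by
      rw [le_div_iff₀ hpos]; linarith [hb]
    have habscj : ‖c j‖ = h ^ (j + 1) / (j + 1).factorial := by
      rw [hcdef]
      simp only []
      rw [Complex.norm_real, Real.norm_of_nonneg (by positivity)]
    calc ‖c j * S j‖ = ‖c j‖ * ‖S j‖ := norm_mul _ _
      _ ≤ (h ^ (j + 1) / (j + 1).factorial) * (Cf j * h ^ (k - j) * I / h) := by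
          rw [habscj]
          exact mul_le_mul_of_nonneg_left hSj (by positivity)
      _ = (Cf j / (j + 1).factorial) * (h ^ (j + 1) * h ^ (k - j) / h) * I := by ring
      _ = (Cf j / (j + 1).factorial) * h ^ k * I := by
          congr 2
          rw [← pow_add]
          have : j + 1 + (k - j) = k + 1 := by omega
          rw [this, pow_succ]
          field_simp
  -- bound the remainder terms
  have hR : ∀ m : ℕ, ‖R m‖
      ≤ (h ^ k / k.factorial) * ∫ s in a m..a (m+1), ‖iteratedDeriv k g s‖ := by
    intro m
    have h1 : ‖R m‖ ≤ ∫ s in a m..a (m+1),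
        ‖(((a (m+1) - s) ^ k / k.factorial : ℝ) : ℂ) * iteratedDeriv k g s‖ := by
      rw [hRdef]
      exact intervalIntegral.norm_integral_le_integral_norm (haa m)
    have hcont2 : Continuous fun s : ℝ => (((a (m+1) - s) ^ k / k.factorial : ℝ) : ℂ) :=
      Complex.continuous_ofReal.comp
        (((continuous_const.sub continuous_id).pow k).div_const _)
    have h2 : ∫ s in a m..a (m+1),
        ‖(((a (m+1) - s) ^ k / k.factorial : ℝ) : ℂ) * iteratedDeriv k g s‖
        ≤ ∫ s in a m..a (m+1), (h ^ k / k.factorial) * ‖iteratedDeriv k g s‖ := by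
      apply intervalIntegral.integral_mono_on (haa m)
      · exact ((hcont2.mul hGk).norm).intervalIntegrable _ _
      · exact (continuous_const.mul hGk.norm).intervalIntegrable _ _
      · intro s hs
        rw [norm_mul]
        apply mul_le_mul_of_nonneg_right _ (norm_nonneg _)
        rw [Complex.norm_real, Real.norm_eq_abs, abs_div, abs_pow, Nat.abs_cast]
        gcongr
        rw [abs_of_nonneg (show (0:ℝ) ≤ a (m+1) - s by linarith [hs.2])]
        linarith [hstep m, hs.1]
    have h3 : ∫ s in a m..a (m+1), (h ^ k / k.factorial) * ‖iteratedDeriv k g s‖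
        = (h ^ k / k.factorial) * ∫ s in a m..a (m+1), ‖iteratedDeriv k g s‖ :=
      intervalIntegral.integral_const_mul _ _
    rw [← h3]
    exact h1.trans h2
  have hRsum : ∑ m ∈ Finset.range M, ‖R m‖ ≤ (h ^ k / k.factorial) * I := by
    calc ∑ m ∈ Finset.range M, ‖R m‖
        ≤ ∑ m ∈ Finset.range M,
            (h ^ k / k.factorial) * ∫ s in a m..a (m+1), ‖iteratedDeriv k g s‖ :=
          Finset.sum_le_sum fun m _ => hR m
      _ = (h ^ k / k.factorial)
            * ∑ m ∈ Finset.range M, ∫ s in a m..a (m+1), ‖iteratedDeriv k g s‖ := by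
          rw [Finset.mul_sum]
      _ = (h ^ k / k.factorial) * I := by rw [hsplitR]
  rw [hE]
  have hfact1 : h ^ k / k.factorial ≤ h ^ k :=
    div_le_self (by positivity) (by exact_mod_cast k.factorial_pos)
  calc ‖(-(∑ j ∈ Finset.Ico 1 k, c j * S j) - ∑ m ∈ Finset.range M, R m)‖
      = ‖((∑ j ∈ Finset.Ico 1 k, c j * S j) + ∑ m ∈ Finset.range M, R m)‖ := by
        rw [show -(∑ j ∈ Finset.Ico 1 k, c j * S j) - ∑ m ∈ Finset.range M, R m
          = -((∑ j ∈ Finset.Ico 1 k, c j * S j) + ∑ m ∈ Finset.range M, R m) by ring,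
          norm_neg]
    _ ≤ ‖(∑ j ∈ Finset.Ico 1 k, c j * S j)‖
        + ‖(∑ m ∈ Finset.range M, R m)‖ := norm_add_le _ _
    _ ≤ (∑ j ∈ Finset.Ico 1 k, ‖c j * S j‖)
        + ∑ m ∈ Finset.range M, ‖R m‖ :=
        add_le_add (norm_sum_le _ _) (norm_sum_le _ _)
    _ ≤ (∑ j ∈ Finset.Ico 1 k, (Cf j / (j + 1).factorial) * h ^ k * I)
        + (h ^ k / k.factorial) * I :=
        add_le_add (Finset.sum_le_sum hCsum) hRsum
    _ = (∑ j ∈ Finset.Ico 1 k, Cf j / (j + 1).factorial) * h ^ k * I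
        + (h ^ k / k.factorial) * I := by
        rw [← Finset.sum_mul, ← Finset.sum_mul]
    _ ≤ ((∑ j ∈ Finset.Ico 1 k, Cf j / (j + 1).factorial) + 1) * h ^ k * I := by
        have := mul_le_mul_of_nonneg_right hfact1 hI
        nlinarith [pow_pos hpos k, hI]

lemma cauchy_schwarz_interval (F G : ℝ → ℂ) (hF : Continuous F) (hG : Continuous G) :
    ∫ s in (0:ℝ)..(2 * Real.pi), ‖F s‖ * ‖G s‖
      ≤ (∫ s in (0:ℝ)..(2 * Real.pi), ‖F s‖ ^ 2) ^ ((1:ℝ)/2)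
        * (∫ s in (0:ℝ)..(2 * Real.pi), ‖G s‖ ^ 2) ^ ((1:ℝ)/2) := by
  have hπ : (0:ℝ) ≤ 2 * Real.pi := by positivity
  rw [intervalIntegral.integral_of_le hπ, intervalIntegral.integral_of_le hπ,
    intervalIntegral.integral_of_le hπ]
  have hmem : ∀ (F : ℝ → ℂ), Continuous F →
      MemLp F (ENNReal.ofReal 2) (volume.restrict (Set.Ioc (0:ℝ) (2 * Real.pi))) := by
    intro F hF
    obtain ⟨C, hC⟩ := (isCompact_Icc (a := (0:ℝ)) (b := 2 * Real.pi)).exists_bound_of_continuousOn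
      hF.continuousOn
    apply MemLp.of_bound hF.aestronglyMeasurable C
    filter_upwards [ae_restrict_mem measurableSet_Ioc] with x hx
    exact hC x (Set.Ioc_subset_Icc_self hx)
  have h2 : (2:ℝ).HolderConjugate 2 := Real.HolderConjugate.two_two
  have key := integral_mul_norm_le_Lp_mul_Lq h2 (hmem F hF) (hmem G hG)
  have hconv : ∀ x : ℝ, x ^ (2:ℝ) = x ^ (2:ℕ) := fun x => by
    rw [show (2:ℝ) = ((2:ℕ):ℝ) by norm_num, Real.rpow_natCast]
  simp_rw [hconv] at key
  exact key


/-- Let `f̃ ∈ H^r_⋄(∂D)`, `r ∈ ℕ`, and let `z̃_m = e^{2πim/M}` be equidistant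
points on the unit circle.  If `Σ_m f̃(z̃_m) = 0`, then the sum of point masses
`f̃_M := (2π/M) Σ_m f̃(z̃_m) δ_{z̃_m}` satisfies
`‖f̃_M − f̃‖_{H^{-r}(∂D)} ≤ C M^{-r} ‖f̃‖_{H^r(∂D)}`, with `C = C(r)` independent of
`M ≥ 2` and `f̃`.

We identify functions on ∂D with 2π-periodic functions of the arclength parameter; the
dual `H^{-r}` norm of the mean-free distribution `f̃_M − f̃` is expressed through its
pairing with arbitrary zero-mean test functions `v ∈ H^r`:
`⟨f̃_M − f̃, v⟩ = (2π/M)Σ_m f(s_m)v(s_m) − ∫_0^{2π} f v`. -/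
theorem point_mass_quadrature_Hminus_r_bound (r : ℕ) (hr : 1 ≤ r) :
    ∃ C > 0, ∀ M : ℕ, 2 ≤ M →
      ∀ f : ℝ → ℂ, ContDiff ℝ r f → (∀ s, f (s + 2 * Real.pi) = f s) →
        (∫ s in (0 : ℝ)..(2 * Real.pi), f s) = 0 →
        (∑ m ∈ Finset.range M, f (2 * Real.pi * m / M)) = 0 →
        ∀ v : ℝ → ℂ, ContDiff ℝ r v → (∀ s, v (s + 2 * Real.pi) = v s) →
          (∫ s in (0 : ℝ)..(2 * Real.pi), v s) = 0 →
          ‖((2 * Real.pi / M) *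
              (∑ m ∈ Finset.range M, f (2 * Real.pi * m / M) * v (2 * Real.pi * m / M))
            - ∫ s in (0 : ℝ)..(2 * Real.pi), f s * v s)‖
          ≤ C * (M : ℝ) ^ (-(r : ℝ)) * Hnorm r f * Hnorm r v := by
  obtain ⟨C0, hC0, hQ⟩ := quad_bound r hr
  refine ⟨C0 * (2 * Real.pi) ^ r * 2 ^ r, by positivity, ?_⟩
  intro M hM f hf hfper _ _ v hv hvper _
  have hM1 : 1 ≤ M := by omega
  have hMpos : (0:ℝ) < M := by exact_mod_cast hM1
  have hπ : (0:ℝ) ≤ 2 * Real.pi := by positivity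
  set g : ℝ → ℂ := fun s => f s * v s with hgdef
  have hg : ContDiff ℝ r g := hf.mul hv
  have hgper : ∀ s, g (s + 2 * Real.pi) = g s := fun s => by
    simp only [hgdef, hfper s, hvper s]
  have hQg := hQ M hM1 g hg hgper
  -- nonnegativity facts
  have hH : ∀ (w : ℝ → ℂ), 0 ≤ Hnorm r w := by
    intro w
    apply Real.rpow_nonneg
    apply Finset.sum_nonneg
    intro j _
    exact intervalIntegral.integral_nonneg hπ (fun s _ => by positivity)
  have hsingle : ∀ (w : ℝ → ℂ), ContDiff ℝ r w → ∀ i, i ≤ r →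
      (∫ s in (0:ℝ)..(2 * Real.pi), ‖iteratedDeriv i w s‖ ^ 2) ^ ((1:ℝ)/2) ≤ Hnorm r w := by
    intro w hw i hi
    rw [Hnorm]
    apply Real.rpow_le_rpow
    · exact intervalIntegral.integral_nonneg hπ (fun s _ => by positivity)
    · apply Finset.single_le_sum (f := fun j =>
        ∫ s in (0:ℝ)..(2 * Real.pi), ‖iteratedDeriv j w s‖ ^ 2)
        (fun j _ => intervalIntegral.integral_nonneg hπ (fun s _ => by positivity))
      exact Finset.mem_range.mpr (by omega)
    · norm_num
  -- Leibniz + Cauchy-Schwarz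
  have hL : ∫ s in (0:ℝ)..(2 * Real.pi), ‖iteratedDeriv r g s‖
      ≤ 2 ^ r * Hnorm r f * Hnorm r v := by
    have hpt : ∀ s : ℝ, ‖iteratedDeriv r g s‖ ≤ ∑ i ∈ Finset.range (r + 1),
        (r.choose i : ℝ) * (‖iteratedDeriv i f s‖ * ‖iteratedDeriv (r - i) v s‖) := by
      intro s
      calc ‖iteratedDeriv r g s‖ = ‖iteratedFDeriv ℝ r g s‖ :=
            (norm_iteratedFDeriv_eq_norm_iteratedDeriv).symm
        _ ≤ ∑ i ∈ Finset.range (r + 1), (r.choose i : ℝ)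
              * ‖iteratedFDeriv ℝ i f s‖ * ‖iteratedFDeriv ℝ (r - i) v s‖ :=
            norm_iteratedFDeriv_mul_le hf hv s le_rfl
        _ = ∑ i ∈ Finset.range (r + 1), (r.choose i : ℝ)
              * (‖iteratedDeriv i f s‖ * ‖iteratedDeriv (r - i) v s‖) := by
            simp_rw [norm_iteratedFDeriv_eq_norm_iteratedDeriv, mul_assoc]
    have hcontD : ∀ (w : ℝ → ℂ), ContDiff ℝ r w → ∀ i, i ≤ r →
        Continuous (iteratedDeriv i w) := fun w hw i hi =>
      hw.continuous_iteratedDeriv i (by exact_mod_cast hi)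
    have hcontG : Continuous fun s => ‖iteratedDeriv r g s‖ :=
      (hcontD g hg r le_rfl).norm
    have hconti : ∀ i ∈ Finset.range (r + 1), Continuous fun s =>
        (r.choose i : ℝ) * (‖iteratedDeriv i f s‖ * ‖iteratedDeriv (r - i) v s‖) := by
      intro i hi
      rw [Finset.mem_range] at hi
      exact continuous_const.mul
        (((hcontD f hf i (by omega)).norm).mul ((hcontD v hv (r - i) (by omega)).norm))
    calc ∫ s in (0:ℝ)..(2 * Real.pi), ‖iteratedDeriv r g s‖
        ≤ ∫ s in (0:ℝ)..(2 * Real.pi), ∑ i ∈ Finset.range (r + 1),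
            (r.choose i : ℝ) * (‖iteratedDeriv i f s‖ * ‖iteratedDeriv (r - i) v s‖) := by
          apply intervalIntegral.integral_mono_on hπ
            (hcontG.intervalIntegrable _ _)
            ((continuous_finset_sum _ hconti).intervalIntegrable _ _)
          exact fun s _ => hpt s
      _ = ∑ i ∈ Finset.range (r + 1), ∫ s in (0:ℝ)..(2 * Real.pi),
            (r.choose i : ℝ) * (‖iteratedDeriv i f s‖ * ‖iteratedDeriv (r - i) v s‖) :=
          intervalIntegral.integral_finset_sum
            (fun i hi => ((hconti i hi).intervalIntegrable _ _))
      _ ≤ ∑ i ∈ Finset.range (r + 1), (r.choose i : ℝ) * (Hnorm r f * Hnorm r v) := by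
          apply Finset.sum_le_sum
          intro i hi
          rw [Finset.mem_range] at hi
          rw [intervalIntegral.integral_const_mul]
          apply mul_le_mul_of_nonneg_left _ (by positivity)
          calc ∫ s in (0:ℝ)..(2 * Real.pi), ‖iteratedDeriv i f s‖ * ‖iteratedDeriv (r - i) v s‖
              ≤ (∫ s in (0:ℝ)..(2 * Real.pi), ‖iteratedDeriv i f s‖ ^ 2) ^ ((1:ℝ)/2)
                * (∫ s in (0:ℝ)..(2 * Real.pi), ‖iteratedDeriv (r - i) v s‖ ^ 2) ^ ((1:ℝ)/2) :=
              cauchy_schwarz_interval _ _ (hcontD f hf i (by omega)) (hcontD v hv (r - i) (by omega))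
            _ ≤ Hnorm r f * Hnorm r v := by
                apply mul_le_mul (hsingle f hf i (by omega)) (hsingle v hv (r - i) (by omega))
                  (Real.rpow_nonneg (intervalIntegral.integral_nonneg hπ
                    (fun s _ => by positivity)) _) (hH f)
      _ = 2 ^ r * Hnorm r f * Hnorm r v := by
          rw [← Finset.sum_mul]
          have : (∑ i ∈ Finset.range (r + 1), (r.choose i : ℝ)) = 2 ^ r := by
            rw [← Nat.cast_sum]
            rw [Nat.sum_range_choose]
            push_cast; ring
          rw [this]; ring
  -- assemble
  have hsum_eq : (∑ m ∈ Finset.range M, f (2 * Real.pi * m / M) * v (2 * Real.pi * m / M))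
      = ∑ m ∈ Finset.range M, g (2 * Real.pi * m / M) := rfl
  rw [hsum_eq]
  have hrpow : (M:ℝ) ^ (-(r:ℝ)) = ((M:ℝ) ^ r)⁻¹ := by
    rw [Real.rpow_neg hMpos.le, Real.rpow_natCast]
  calc ‖((2 * Real.pi / M : ℂ) * (∑ m ∈ Finset.range M, g (2 * Real.pi * m / M))
        - ∫ s in (0:ℝ)..(2 * Real.pi), g s)‖
      ≤ C0 * (2 * Real.pi / M) ^ r * ∫ s in (0:ℝ)..(2 * Real.pi), ‖iteratedDeriv r g s‖ := hQg
    _ ≤ C0 * (2 * Real.pi / M) ^ r * (2 ^ r * Hnorm r f * Hnorm r v) := by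
        apply mul_le_mul_of_nonneg_left hL (by positivity)
    _ = C0 * (2 * Real.pi) ^ r * 2 ^ r * (M:ℝ) ^ (-(r:ℝ)) * Hnorm r f * Hnorm r v := by
        rw [hrpow, div_pow]
        field_simp
end

section
/- For a 2π-periodic function h with r-th derivative in L¹, the error of the trapezoidal rule with M equidistant nodes satisfies |(2π/M)Σ_{m=0}^{M-1} h(2πm/M) − ∫₀^{2π} h(s) ds| ≤ C(r) M^{-r} ‖h^{(r)}‖_{L¹(0,2π)}. -/
open MeasureTheory intervalIntegral Set

noncomputable def tnode (M m : ℕ) : ℝ := 2 * Real.pi * m / M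

lemma tnode_succ (M m : ℕ) (hM : 1 ≤ M) :
    tnode M (m+1) = tnode M m + 2 * Real.pi / M := by
  have : (M:ℝ) ≠ 0 := Nat.cast_ne_zero.2 (by omega)
  unfold tnode; push_cast
  ring

lemma tnode_zero (M : ℕ) : tnode M 0 = 0 := by simp [tnode]

lemma tnode_last (M : ℕ) (hM : 1 ≤ M) : tnode M M = 2 * Real.pi := by
  have : (M:ℝ) ≠ 0 := Nat.cast_ne_zero.2 (by omega)
  unfold tnode; exact mul_div_cancel_right₀ _ this

lemma iteratedDeriv_periodic (h : ℝ → ℂ) (hp : ∀ s, h (s + 2 * Real.pi) = h s) (k : ℕ) :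
    ∀ s, iteratedDeriv k h (s + 2 * Real.pi) = iteratedDeriv k h s := by
  intro s
  have hfun : (fun z => h (z + 2 * Real.pi)) = h := funext hp
  calc iteratedDeriv k h (s + 2 * Real.pi)
      = iteratedDeriv k (fun z => h (z + 2 * Real.pi)) s :=
        (congrFun (iteratedDeriv_comp_add_const k h (2 * Real.pi)) s).symm
    _ = iteratedDeriv k h s := by rw [hfun]

lemma integral_iteratedDeriv_eq_zero {r n : ℕ} (h : ℝ → ℂ) (hh : ContDiff ℝ r h)
    (hp : ∀ s, h (s + 2 * Real.pi) = h s) (h1 : 1 ≤ n) (h2 : n ≤ r) :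
    ∫ x in (0:ℝ)..(2 * Real.pi), iteratedDeriv n h x = 0 := by
  obtain ⟨k, rfl⟩ : ∃ k, n = k + 1 := ⟨n - 1, by omega⟩
  have hklt : (k : WithTop ℕ∞) < r := by exact_mod_cast (by omega : k < r)
  have hd : ∀ x, HasDerivAt (iteratedDeriv k h) (iteratedDeriv (k+1) h x) x := by
    intro x
    rw [iteratedDeriv_succ]
    exact ((hh.differentiable_iteratedDeriv k hklt) x).hasDerivAt
  rw [integral_eq_sub_of_hasDerivAt (fun x _ => hd x)
    ((hh.continuous_iteratedDeriv (k+1) (by exact_mod_cast h2)).intervalIntegrable _ _)]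
  have := iteratedDeriv_periodic h hp k 0
  simp only [zero_add] at this
  rw [this, sub_self]

theorem trap_kernel (r : ℕ) : ∀ n, 1 ≤ n → n ≤ r →
    ∃ P : ℝ → ℂ, Continuous P ∧
      ∀ M : ℕ, 1 ≤ M → ∀ h : ℝ → ℂ, ContDiff ℝ r h → (∀ s, h (s + 2 * Real.pi) = h s) →
        ∑ m ∈ Finset.range M,
            (((2 * Real.pi / M : ℝ) : ℂ) * h (tnode M m)
              - ∫ x in tnode M m..tnode M (m+1), h x)
          = ∑ m ∈ Finset.range M, ∫ x in tnode M m..tnode M (m+1),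
              (((2 * Real.pi / M : ℝ) ^ n : ℝ) : ℂ)
                * P ((x - tnode M m) / (2 * Real.pi / M)) * iteratedDeriv n h x := by
  intro n hn
  induction n, hn using Nat.le_induction with
  | base =>
    intro h1r
    refine ⟨fun y => (y : ℂ) - 1, by fun_prop, ?_⟩
    intro M hM h hh hp
    have hM0 : (0:ℝ) < M := by exact_mod_cast Nat.pos_of_ne_zero (by omega)
    set Δ : ℝ := 2 * Real.pi / M with hΔdef
    have hΔ0 : 0 < Δ := by positivity
    have hΔne : (Δ : ℂ) ≠ 0 := by exact_mod_cast hΔ0.ne'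
    have hder : ∀ x : ℝ, HasDerivAt h (deriv h x) x := fun x =>
      ((hh.differentiable (by exact_mod_cast (show r ≠ 0 by omega))) x).hasDerivAt
    have hcd : Continuous (deriv h) := hh.continuous_deriv (by exact_mod_cast h1r)
    apply Finset.sum_congr rfl
    intro m _
    set a := tnode M m with ha
    set b := tnode M (m+1) with hb
    have hba : b = a + Δ := tnode_succ M m hM
    have hu : ∀ x ∈ uIcc a b, HasDerivAt (fun y : ℝ => ((y - b : ℝ) : ℂ)) 1 x := by
      intro x _
      have := ((hasDerivAt_id x).sub_const b).ofReal_comp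
      simpa using this
    have key := integral_deriv_mul_eq_sub hu (fun x _ => hder x)
      intervalIntegrable_const (hcd.intervalIntegrable a b)
    have e1 : (∫ x in a..b, ((1:ℂ) * h x + ((x - b : ℝ) : ℂ) * deriv h x))
        = ∫ x in a..b, (h x + ((x - b : ℝ) : ℂ) * deriv h x) :=
      integral_congr fun x _ => by ring
    rw [e1, integral_add (hh.continuous.intervalIntegrable a b)
      ((by fun_prop : Continuous fun x : ℝ => ((x - b : ℝ) : ℂ) * deriv h x).intervalIntegrable a b)] at key
    have hpt : ∀ x ∈ uIcc a b, (((Δ ^ 1 : ℝ)) : ℂ) * ((((x - a) / Δ : ℝ) : ℂ) - 1)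
        * iteratedDeriv 1 h x = ((x - b : ℝ) : ℂ) * deriv h x := by
      intro x _
      rw [iteratedDeriv_one]
      congr 1
      push_cast
      rw [hba]
      push_cast
      field_simp
      ring
    rw [integral_congr hpt]
    have hend : ((b - b : ℝ) : ℂ) * h b - ((a - b : ℝ) : ℂ) * h a = (Δ : ℂ) * h a := by
      rw [hba]; push_cast; ring
    rw [hend] at key
    linear_combination -key
  | succ n hn IH =>
    intro hsr
    obtain ⟨P, hPc, hP⟩ := IH (by omega)
    set c : ℂ := ∫ t in (0:ℝ)..1, P t with hcdef
    set Q : ℝ → ℂ := fun y => ∫ t in (0:ℝ)..y, (P t - c) with hQdef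
    have hQd : ∀ y, HasDerivAt Q (P y - c) y := fun y =>
      integral_hasDerivAt_right ((hPc.sub continuous_const).intervalIntegrable 0 y)
        ((hPc.sub continuous_const).stronglyMeasurableAtFilter _ _)
        (hPc.sub continuous_const).continuousAt
    have hQc : Continuous Q := by
      rw [continuous_iff_continuousAt]; exact fun y => (hQd y).continuousAt
    have hQ0 : Q 0 = 0 := integral_same
    have hQ1 : Q 1 = 0 := by
      simp only [hQdef]
      rw [integral_sub (hPc.intervalIntegrable 0 1) intervalIntegrable_const,
        intervalIntegral.integral_const]
      simp [hcdef]
    refine ⟨fun y => -Q y, hQc.neg, ?_⟩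
    intro M hM h hh hp
    rw [hP M hM h hh hp]
    have hM0 : (0:ℝ) < M := by exact_mod_cast Nat.pos_of_ne_zero (by omega)
    set Δ : ℝ := 2 * Real.pi / M with hΔdef
    have hΔ0 : 0 < Δ := by positivity
    have hΔne : Δ ≠ 0 := hΔ0.ne'
    have hΔnec : (Δ:ℂ) ≠ 0 := by exact_mod_cast hΔ0.ne'
    have hn1r : ((n+1 : ℕ) : WithTop ℕ∞) ≤ (r : WithTop ℕ∞) := by exact_mod_cast hsr
    have hnltr : ((n : ℕ) : WithTop ℕ∞) < (r : WithTop ℕ∞) := by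
      exact_mod_cast (by omega : n < r)
    have hcn : Continuous (iteratedDeriv n h) :=
      hh.continuous_iteratedDeriv n (le_of_lt hnltr)
    have hcn1 : Continuous (iteratedDeriv (n+1) h) := hh.continuous_iteratedDeriv (n+1) hn1r
    have hdvn : ∀ x, HasDerivAt (iteratedDeriv n h) (iteratedDeriv (n+1) h x) x := by
      intro x
      rw [iteratedDeriv_succ]
      exact ((hh.differentiable_iteratedDeriv n hnltr) x).hasDerivAt
    have cell : ∀ m : ℕ,
        (∫ x in tnode M m..tnode M (m+1),
          ((Δ ^ n : ℝ) : ℂ) * P ((x - tnode M m)/Δ) * iteratedDeriv n h x)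
        = (((Δ ^ n : ℝ) : ℂ) * c) * (∫ x in tnode M m..tnode M (m+1), iteratedDeriv n h x)
          + ∫ x in tnode M m..tnode M (m+1),
              ((Δ ^ (n+1) : ℝ) : ℂ) * (-Q ((x - tnode M m)/Δ)) * iteratedDeriv (n+1) h x := by
      intro m
      set a := tnode M m with ha
      set b := tnode M (m+1) with hb
      have hba : b = a + Δ := tnode_succ M m hM
      set u : ℝ → ℂ := fun x => ((Δ ^ (n+1) : ℝ) : ℂ) * Q ((x - a)/Δ) with hudef
      set u' : ℝ → ℂ := fun x => ((Δ ^ n : ℝ) : ℂ) * (P ((x - a)/Δ) - c) with hu'def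
      have hcontu' : Continuous u' := by
        simp only [hu'def]
        exact continuous_const.mul ((hPc.comp (by fun_prop)).sub continuous_const)
      have hcontu : Continuous u := by
        simp only [hudef]
        exact continuous_const.mul (hQc.comp (by fun_prop))
      have hud : ∀ x : ℝ, HasDerivAt u (u' x) x := by
        intro x
        have hg : HasDerivAt (fun y : ℝ => (y - a)/Δ) (1/Δ) x := by
          simpa using ((hasDerivAt_id x).sub_const a).div_const Δ
        have h2 := ((hQd ((x - a)/Δ)).scomp x hg).const_mul (((Δ ^ (n+1) : ℝ)) : ℂ)
        simp only [Function.comp_def] at h2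
        refine h2.congr_deriv ?_
        simp only [hu'def]
        rw [Complex.real_smul]
        push_cast
        field_simp
        ring
      have ibp := integral_deriv_mul_eq_sub (u := u) (v := iteratedDeriv n h)
        (u' := u') (v' := iteratedDeriv (n+1) h)
        (fun x _ => hud x) (fun x _ => hdvn x)
        (hcontu'.intervalIntegrable a b) (hcn1.intervalIntegrable a b)
      have hub : u b = 0 := by
        simp only [hudef, hba]
        have h1 : (a + Δ - a)/Δ = 1 := by rw [add_sub_cancel_left, div_self hΔne]
        rw [h1, hQ1, mul_zero]
      have hua : u a = 0 := by
        simp only [hudef]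
        rw [sub_self, zero_div, hQ0, mul_zero]
      rw [hub, hua] at ibp
      have ibp2 : (∫ x in a..b, u' x * iteratedDeriv n h x)
          + (∫ x in a..b, u x * iteratedDeriv (n+1) h x) = 0 := by
        rw [← integral_add (f := fun x => u' x * iteratedDeriv n h x)
          (g := fun x => u x * iteratedDeriv (n+1) h x) ((hcontu'.mul hcn).intervalIntegrable a b)
          ((hcontu.mul hcn1).intervalIntegrable a b), ibp]
        ring
      have split : (∫ x in a..b, ((Δ ^ n : ℝ) : ℂ) * P ((x - a)/Δ) * iteratedDeriv n h x)
          = (∫ x in a..b, u' x * iteratedDeriv n h x)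
            + (((Δ ^ n : ℝ) : ℂ) * c) * ∫ x in a..b, iteratedDeriv n h x := by
        rw [← intervalIntegral.integral_const_mul]
        rw [← integral_add (f := fun x => u' x * iteratedDeriv n h x)
          (g := fun x => ((Δ ^ n : ℝ) : ℂ) * c * iteratedDeriv n h x)
          ((hcontu'.mul hcn).intervalIntegrable a b)
          ((continuous_const.mul hcn).intervalIntegrable a b)]
        exact integral_congr fun x _ => by simp only [hu'def]; ring
      have last : (∫ x in a..b, u x * iteratedDeriv (n+1) h x)
          = - ∫ x in a..b, ((Δ ^ (n+1) : ℝ) : ℂ) * (-Q ((x - a)/Δ)) * iteratedDeriv (n+1) h x := by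
        rw [← intervalIntegral.integral_neg]
        exact integral_congr fun x _ => by simp only [hudef]; ring
      rw [split]
      linear_combination ibp2 - last
    calc (∑ m ∈ Finset.range M, ∫ x in tnode M m..tnode M (m+1),
            ((Δ ^ n : ℝ) : ℂ) * P ((x - tnode M m)/Δ) * iteratedDeriv n h x)
        = ∑ m ∈ Finset.range M,
            ((((Δ ^ n : ℝ) : ℂ) * c) * (∫ x in tnode M m..tnode M (m+1), iteratedDeriv n h x)
              + ∫ x in tnode M m..tnode M (m+1),
                  ((Δ ^ (n+1) : ℝ) : ℂ) * (-Q ((x - tnode M m)/Δ)) * iteratedDeriv (n+1) h x) :=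
          Finset.sum_congr rfl fun m _ => cell m
      _ = (((Δ ^ n : ℝ) : ℂ) * c)
            * (∑ m ∈ Finset.range M, ∫ x in tnode M m..tnode M (m+1), iteratedDeriv n h x)
          + ∑ m ∈ Finset.range M, ∫ x in tnode M m..tnode M (m+1),
              ((Δ ^ (n+1) : ℝ) : ℂ) * (-Q ((x - tnode M m)/Δ)) * iteratedDeriv (n+1) h x := by
          rw [Finset.sum_add_distrib, Finset.mul_sum]
      _ = ∑ m ∈ Finset.range M, ∫ x in tnode M m..tnode M (m+1),
            ((Δ ^ (n+1) : ℝ) : ℂ) * (-Q ((x - tnode M m)/Δ)) * iteratedDeriv (n+1) h x := by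
          rw [sum_integral_adjacent_intervals (fun k _ => hcn.intervalIntegrable _ _)]
          rw [tnode_zero, tnode_last M hM,
            integral_iteratedDeriv_eq_zero h hh hp hn (by omega)]
          simp

lemma tnode_le (M m : ℕ) (hM : 1 ≤ M) : tnode M m ≤ tnode M (m+1) := by
  have hM0 : (0:ℝ) < M := by exact_mod_cast Nat.pos_of_ne_zero (by omega)
  rw [tnode_succ M m hM]
  have : 0 < 2 * Real.pi / M := by positivity
  linarith

/-- For a 2π-periodic function `h` with r-th derivative in L¹, the error of
the trapezoidal rule (= left-endpoint rule, by periodicity) with M equidistant nodes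
satisfies
`|(2π/M) Σ_{m=0}^{M-1} h(2πm/M) − ∫₀^{2π} h| ≤ C(r) M^{-r} ‖h^{(r)}‖_{L¹(0,2π)}`. -/
theorem trapezoidal_rule_periodic_error (r : ℕ) (hr : 1 ≤ r) :
    ∃ C > 0, ∀ M : ℕ, 1 ≤ M →
      ∀ h : ℝ → ℂ, ContDiff ℝ r h → (∀ s, h (s + 2 * Real.pi) = h s) →
        ‖(2 * Real.pi / M) * (∑ m ∈ Finset.range M, h (2 * Real.pi * m / M))
            - ∫ s in (0 : ℝ)..(2 * Real.pi), h s‖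
          ≤ C * (M : ℝ) ^ (-(r : ℝ)) *
              ∫ s in (0 : ℝ)..(2 * Real.pi), ‖iteratedDeriv r h s‖ := by
  obtain ⟨P, hPc, hP⟩ := trap_kernel r r hr le_rfl
  obtain ⟨B, hB⟩ := (isCompact_Icc (a := (0:ℝ)) (b := 1)).exists_bound_of_continuousOn
    hPc.continuousOn
  have hB0 : 0 ≤ B := le_trans (norm_nonneg _) (hB 0 ⟨le_rfl, zero_le_one⟩)
  refine ⟨(2 * Real.pi) ^ r * (B + 1), by positivity, ?_⟩
  intro M hM h hh hp
  have hM0 : (0:ℝ) < M := by exact_mod_cast Nat.pos_of_ne_zero (by omega)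
  set Δ : ℝ := 2 * Real.pi / M with hΔdef
  have hΔ0 : 0 < Δ := by positivity
  have hcr : Continuous (iteratedDeriv r h) :=
    hh.continuous_iteratedDeriv r (by exact_mod_cast le_rfl)
  have hsum : ((2 * (Real.pi:ℂ) / M)) * (∑ m ∈ Finset.range M, h (2 * Real.pi * m / M))
      = ∑ m ∈ Finset.range M, ((Δ : ℂ) * h (tnode M m)) := by
    rw [Finset.mul_sum]
    refine Finset.sum_congr rfl fun m _ => ?_
    have : (2 * Real.pi * (m:ℝ) / M) = tnode M m := rfl
    rw [← this]
    congr 1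
    push_cast [hΔdef]
    ring
  have hint : (∫ s in (0:ℝ)..(2 * Real.pi), h s)
      = ∑ m ∈ Finset.range M, ∫ x in tnode M m..tnode M (m+1), h x := by
    rw [sum_integral_adjacent_intervals (fun k _ => hh.continuous.intervalIntegrable _ _),
      tnode_zero, tnode_last M hM]
  have hE : ((2 * (Real.pi:ℂ) / M)) * (∑ m ∈ Finset.range M, h (2 * Real.pi * m / M))
        - (∫ s in (0:ℝ)..(2 * Real.pi), h s)
      = ∑ m ∈ Finset.range M,
          (((Δ : ℝ) : ℂ) * h (tnode M m) - ∫ x in tnode M m..tnode M (m+1), h x) := by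
    rw [hsum, hint, Finset.sum_sub_distrib]
  rw [hE, hP M hM h hh hp]
  have hcell_bound : ∀ m ∈ Finset.range M,
      ‖∫ x in tnode M m..tnode M (m+1),
          ((Δ ^ r : ℝ) : ℂ) * P ((x - tnode M m) / Δ) * iteratedDeriv r h x‖
        ≤ (Δ ^ r * (B + 1)) * ∫ x in tnode M m..tnode M (m+1), ‖iteratedDeriv r h x‖ := by
    intro m _
    have hab : tnode M m ≤ tnode M (m+1) := tnode_le M m hM
    refine le_trans (norm_integral_le_integral_norm hab) ?_
    rw [← intervalIntegral.integral_const_mul]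
    refine integral_mono_on hab
      ((by fun_prop : Continuous fun x : ℝ =>
        ‖((Δ ^ r : ℝ) : ℂ) * P ((x - tnode M m) / Δ) * iteratedDeriv r h x‖).intervalIntegrable _ _)
      ((by fun_prop : Continuous fun x : ℝ =>
        (Δ ^ r * (B + 1)) * ‖iteratedDeriv r h x‖).intervalIntegrable _ _) ?_
    intro x hx
    have hmem : (x - tnode M m) / Δ ∈ Icc (0:ℝ) 1 := by
      have h1 : tnode M (m+1) = tnode M m + Δ := tnode_succ M m hM
      constructor
      · apply div_nonneg _ hΔ0.le
        linarith [hx.1]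
      · rw [div_le_one hΔ0]
        have := hx.2
        rw [h1] at this
        linarith
    have hPx : ‖P ((x - tnode M m) / Δ)‖ ≤ B + 1 := le_trans (hB _ hmem) (by linarith)
    calc ‖((Δ ^ r : ℝ) : ℂ) * P ((x - tnode M m) / Δ) * iteratedDeriv r h x‖
        = Δ ^ r * (‖P ((x - tnode M m) / Δ)‖ * ‖iteratedDeriv r h x‖) := by
          rw [norm_mul, norm_mul, Complex.norm_real, Real.norm_eq_abs,
            abs_of_nonneg (by positivity), mul_assoc]
      _ ≤ Δ ^ r * ((B + 1) * ‖iteratedDeriv r h x‖) := by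
          gcongr
      _ = (Δ ^ r * (B + 1)) * ‖iteratedDeriv r h x‖ := by ring
  calc ‖∑ m ∈ Finset.range M, ∫ x in tnode M m..tnode M (m+1),
          ((Δ ^ r : ℝ) : ℂ) * P ((x - tnode M m) / Δ) * iteratedDeriv r h x‖
      ≤ ∑ m ∈ Finset.range M, ‖∫ x in tnode M m..tnode M (m+1),
          ((Δ ^ r : ℝ) : ℂ) * P ((x - tnode M m) / Δ) * iteratedDeriv r h x‖ :=
        norm_sum_le _ _
    _ ≤ ∑ m ∈ Finset.range M,
          (Δ ^ r * (B + 1)) * ∫ x in tnode M m..tnode M (m+1), ‖iteratedDeriv r h x‖ :=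
        Finset.sum_le_sum hcell_bound
    _ = (Δ ^ r * (B + 1)) * ∫ x in (0:ℝ)..(2 * Real.pi), ‖iteratedDeriv r h x‖ := by
        rw [← Finset.mul_sum,
          sum_integral_adjacent_intervals (fun k _ => (hcr.norm.intervalIntegrable _ _)),
          tnode_zero, tnode_last M hM]
    _ = (2 * Real.pi) ^ r * (B + 1) * (M:ℝ) ^ (-(r:ℝ)) *
          ∫ s in (0:ℝ)..(2 * Real.pi), ‖iteratedDeriv r h s‖ := by
        have hΔr : Δ ^ r = (2 * Real.pi) ^ r * (M:ℝ) ^ (-(r:ℝ)) := by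
          rw [Real.rpow_neg hM0.le, Real.rpow_natCast, hΔdef, div_pow, div_eq_mul_inv]
        rw [hΔr]
        ring
end
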